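/- Let p be an odd prime, G = SL₂(Z/p²Z)/{±I}, and B the image in G of the subgroup of matrices (a b; c d) with c ≡ 0 (mod p²). Then the number of double cosets B\G/B equals 4. -/

import Mathlib

open Matrix

/-- The subgroup `Γ₀(p²)` of `SL₂(ℤ/p²ℤ)`: matrices whose lower-left entry is `0`. -/
def BorelSubgroup (n : ℕ) : Subgroup (Matrix.SpecialLinearGroup (Fin 2) (ZMod n)) where
  carrier := {A | A.1 1 0 = 0}
  one_mem' := by simp [Matrix.SpecialLinearGroup.coe_one, Matrix.one_apply]
  mul_mem' := by
    intro A B hA hB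
    simp only [Set.mem_setOf_eq] at *
    simp [Matrix.SpecialLinearGroup.coe_mul, Matrix.mul_apply, Fin.sum_univ_two, hA, hB]
  inv_mem' := by
    intro A hA
    simp only [Set.mem_setOf_eq] at *
    simp [Matrix.SpecialLinearGroup.coe_inv, Matrix.adjugate_fin_two, hA]

/-- The central subgroup `{±I}` of `SL₂(ℤ/nℤ)`. -/
def pmOne (n : ℕ) : Subgroup (Matrix.SpecialLinearGroup (Fin 2) (ZMod n)) :=
  Subgroup.zpowers (-1)

instance pmOne_normal (n : ℕ) : (pmOne n).Normal := by
  constructor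
  intro x hx g
  obtain ⟨k, rfl⟩ := Subgroup.mem_zpowers_iff.mp hx
  have hc : Commute g (-1 : Matrix.SpecialLinearGroup (Fin 2) (ZMod n)) := by
    unfold Commute SemiconjBy
    ext i j
    simp [Matrix.SpecialLinearGroup.coe_mul]
  have : g * (-1) ^ k * g⁻¹ = (-1) ^ k := by
    rw [(hc.zpow_right k).eq, mul_assoc, mul_inv_cancel, mul_one]
  rw [this]
  exact Subgroup.mem_zpowers_iff.mpr ⟨k, rfl⟩

/-- `G = SL₂(ℤ/p²ℤ)/{±I}`. -/
def PSLmod (n : ℕ) : Type := Matrix.SpecialLinearGroup (Fin 2) (ZMod n) ⧸ pmOne n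

instance (n : ℕ) : Group (PSLmod n) := QuotientGroup.Quotient.group _

/-- The image `B` of `Γ₀(p²)` in `G = SL₂(ℤ/p²ℤ)/{±I}`. -/
def BorelImage (n : ℕ) : Subgroup (PSLmod n) :=
  (BorelSubgroup n).map (QuotientGroup.mk' (pmOne n))

/-! ### Ring-level lemmas about `ZMod (p^2)` -/

section Ring
variable {p : ℕ}

/-- reduction map `ZMod p² → ZMod p` -/
def redZ (p : ℕ) : ZMod (p^2) →+* ZMod p := ZMod.castHom (dvd_pow_self p two_ne_zero) (ZMod p)

lemma redZ_p : redZ p (p : ZMod (p^2)) = 0 := by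
  simp [redZ, map_natCast, ZMod.natCast_self]

lemma redZ_natCast (k : ℕ) : redZ p ((k : ZMod (p^2))) = (k : ZMod p) := by
  simp [redZ, map_natCast]

lemma natCast_val_self (hp : p.Prime) (x : ZMod (p^2)) : ((x.val : ℕ) : ZMod (p^2)) = x := by
  haveI : NeZero (p^2) := ⟨pow_ne_zero 2 hp.ne_zero⟩
  exact ZMod.natCast_zmod_val x

lemma redZ_eq_zero_iff (hp : p.Prime) (x : ZMod (p^2)) : redZ p x = 0 ↔ p ∣ x.val := by
  conv_lhs => rw [← natCast_val_self hp x]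
  rw [redZ_natCast, ZMod.natCast_eq_zero_iff]

lemma pmul_eq_zero_iff (hp : p.Prime) (x : ZMod (p^2)) :
    (p : ZMod (p^2)) * x = 0 ↔ redZ p x = 0 := by
  have h1 : (p : ZMod (p^2)) * x = ((p * x.val : ℕ) : ZMod (p^2)) := by
    push_cast
    rw [natCast_val_self hp x]
  have h2 : (p^2 ∣ p * x.val) ↔ p ∣ x.val := by
    generalize x.val = m
    rw [pow_two]
    exact mul_dvd_mul_iff_left (by exact_mod_cast hp.ne_zero : (p:ℕ) ≠ 0)
  rw [h1, ZMod.natCast_eq_zero_iff, h2, redZ_eq_zero_iff hp]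

lemma p_mul_p : (p : ZMod (p^2)) * p = 0 := by
  have : ((p^2 : ℕ) : ZMod (p^2)) = 0 := ZMod.natCast_self _
  rw [← this]; push_cast; ring

lemma isUnit_iff_redZ (hp : p.Prime) (x : ZMod (p^2)) : IsUnit x ↔ redZ p x ≠ 0 := by
  rw [Ne, redZ_eq_zero_iff hp]
  conv_lhs => rw [← natCast_val_self hp x]
  rw [ZMod.isUnit_iff_coprime, Nat.coprime_pow_right_iff (by norm_num), Nat.coprime_comm,
    Nat.Prime.coprime_iff_not_dvd hp]

lemma exists_p_mul (hp : p.Prime) (x : ZMod (p^2)) (hx : ¬ IsUnit x) :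
    ∃ y : ZMod (p^2), x = (p : ZMod (p^2)) * y := by
  rw [isUnit_iff_redZ hp, not_not, redZ_eq_zero_iff hp] at hx
  obtain ⟨k, hk⟩ := hx
  refine ⟨(k : ZMod (p^2)), ?_⟩
  calc x = ((p * k : ℕ) : ZMod (p^2)) := by rw [← natCast_val_self hp x, hk]
    _ = (p : ZMod (p^2)) * k := by push_cast; ring

lemma lift_unit (hp : p.Prime) (s : ZMod p) (hs : s ≠ 0) :
    ∃ x : ZMod (p^2), IsUnit x ∧ redZ p x = s := by
  haveI : NeZero p := ⟨hp.ne_zero⟩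
  refine ⟨(s.val : ZMod (p^2)), ?_, ?_⟩
  · rw [ZMod.isUnit_iff_coprime, Nat.coprime_pow_right_iff (by norm_num), Nat.coprime_comm,
      Nat.Prime.coprime_iff_not_dvd hp]
    intro hdvd
    rw [← ZMod.natCast_eq_zero_iff, ZMod.natCast_zmod_val] at hdvd
    exact hs hdvd
  · rw [redZ_natCast, ZMod.natCast_zmod_val]

lemma redZ_unit_ne (hp : p.Prime) {x : ZMod (p^2)} (hx : IsUnit x) : redZ p x ≠ 0 :=
  (isUnit_iff_redZ hp x).mp hx

end Ring

/-! ### Quadratic-residue lemmas -/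

section Quad
variable {p : ℕ}

lemma exists_nonsquare_zmod (hp : p.Prime) (hodd : Odd p) :
    ∃ n : ZMod p, n ≠ 0 ∧ ¬ IsSquare n := by
  haveI : Fact p.Prime := ⟨hp⟩
  have hchar : ringChar (ZMod p) ≠ 2 := by
    rw [ZMod.ringChar_zmod_n]
    intro h; rw [h] at hodd; simp [Nat.odd_iff] at hodd
  obtain ⟨n, hn⟩ := FiniteField.exists_nonsquare hchar
  refine ⟨n, ?_, hn⟩
  rintro rfl; exact hn (IsSquare.zero)

lemma nonsquare_div_nonsquare (hp : p.Prime) {a n : ZMod p} (ha : a ≠ 0) (hn : n ≠ 0)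
    (hna : ¬ IsSquare a) (hnn : ¬ IsSquare n) : ∃ s : ZMod p, s ≠ 0 ∧ n * (s * s) = a := by
  haveI : Fact p.Prime := ⟨hp⟩
  have h1 : IsSquare (a * n⁻¹) := by
    have hne : a * n⁻¹ ≠ 0 := mul_ne_zero ha (inv_ne_zero hn)
    rw [← quadraticChar_one_iff_isSquare hne]
    have hmul : quadraticChar (ZMod p) (a * n⁻¹) * quadraticChar (ZMod p) n
        = quadraticChar (ZMod p) a := by
      rw [← _root_.map_mul]
      congr 1
      field_simp
    rw [quadraticChar_neg_one_iff_not_isSquare.mpr hna] at hmul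
    rw [quadraticChar_neg_one_iff_not_isSquare.mpr hnn] at hmul
    omega
  obtain ⟨s, hs⟩ := h1
  refine ⟨s, ?_, ?_⟩
  · rintro rfl; rw [mul_zero] at hs; exact ha (by field_simp at hs ⊢; simpa using hs)
  · rw [← hs]; field_simp

lemma square_sqrt {F : Type*} [Field F] {a : F} (ha : a ≠ 0) (h : IsSquare a) :
    ∃ s : F, s ≠ 0 ∧ s * s = a := by
  obtain ⟨s, rfl⟩ := h
  exact ⟨s, fun h0 => ha (by simp [h0]), rfl⟩

end Quad

/-! ### SL₂ helpers -/

section SL2sec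
variable {p : ℕ}

/-- build an element of SL₂ from entries -/
def mk2 {R : Type*} [CommRing R] (a b c d : R) (h : a*d - b*c = 1) :
    Matrix.SpecialLinearGroup (Fin 2) R :=
  ⟨!![a,b;c,d], by rw [Matrix.det_fin_two_of]; exact h⟩

@[simp] lemma mk2_00 {R : Type*} [CommRing R] (a b c d : R) (h) : (mk2 a b c d h).1 0 0 = a := rfl
@[simp] lemma mk2_01 {R : Type*} [CommRing R] (a b c d : R) (h) : (mk2 a b c d h).1 0 1 = b := rfl
@[simp] lemma mk2_10 {R : Type*} [CommRing R] (a b c d : R) (h) : (mk2 a b c d h).1 1 0 = c := rfl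
@[simp] lemma mk2_11 {R : Type*} [CommRing R] (a b c d : R) (h) : (mk2 a b c d h).1 1 1 = d := rfl

lemma mul_entry {R : Type*} [CommRing R] (A B : Matrix.SpecialLinearGroup (Fin 2) R) (i j : Fin 2) :
    (A * B).1 i j = A.1 i 0 * B.1 0 j + A.1 i 1 * B.1 1 j := by
  show (A.1 * B.1) i j = _
  rw [Matrix.mul_apply, Fin.sum_univ_two]

lemma inv_entries {R : Type*} [CommRing R] (A : Matrix.SpecialLinearGroup (Fin 2) R) :
    (A⁻¹).1 = !![A.1 1 1, -A.1 0 1; -A.1 1 0, A.1 0 0] := by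
  have := Matrix.SpecialLinearGroup.coe_inv A
  rw [this, Matrix.adjugate_fin_two]

lemma det_rel {R : Type*} [CommRing R] (A : Matrix.SpecialLinearGroup (Fin 2) R) :
    A.1 0 0 * A.1 1 1 - A.1 0 1 * A.1 1 0 = 1 := by
  rw [← Matrix.det_fin_two]; exact A.2

lemma one_entry_00 {R : Type*} [CommRing R] :
    (1 : Matrix.SpecialLinearGroup (Fin 2) R).1 0 0 = 1 := by
  rw [Matrix.SpecialLinearGroup.coe_one]; simp

lemma one_entry_10 {R : Type*} [CommRing R] :
    (1 : Matrix.SpecialLinearGroup (Fin 2) R).1 1 0 = 0 := by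
  rw [Matrix.SpecialLinearGroup.coe_one]; simp [Matrix.one_apply]

lemma mem_borel {m : ℕ} (t : Matrix.SpecialLinearGroup (Fin 2) (ZMod m)) :
    t ∈ BorelSubgroup m ↔ t.1 1 0 = 0 := Iff.rfl

/-- the four double-coset representatives -/
def reps (p : ℕ) (n : ZMod (p^2)) : Fin 4 → Matrix.SpecialLinearGroup (Fin 2) (ZMod (p^2)) :=
  ![1,
    mk2 0 (-1) 1 0 (by ring),
    mk2 1 0 (p : ZMod (p^2)) 1 (by ring),
    mk2 1 0 ((p : ZMod (p^2)) * n) 1 (by ring)]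

end SL2sec

section Coverage
variable {p : ℕ}

/-- unipotent case: if `g` has lower-left entry `p*v` and the key congruence holds,
`g` lies in the double coset of `w = (1 0; p*e 1)`. -/
lemma coverage_unipotent (g w : Matrix.SpecialLinearGroup (Fin 2) (ZMod (p^2)))
    (e v γ γi : ZMod (p^2))
    (hw00 : w.1 0 0 = 1) (hw01 : w.1 0 1 = 0) (hw10 : w.1 1 0 = (p : ZMod (p^2)) * e)
    (hw11 : w.1 1 1 = 1)
    (hc : g.1 1 0 = (p : ZMod (p^2)) * v) (hγ : γ * γi = 1)
    (hkey : (p : ZMod (p^2)) * (e * (γ * γ)) = (p : ZMod (p^2)) * (g.1 0 0 * v)) :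
    ∃ t1 ∈ BorelSubgroup (p^2), ∃ t2 ∈ BorelSubgroup (p^2), g = t1 * w * t2 := by
  have hdet := det_rel g
  have hpp : (p : ZMod (p^2)) * p = 0 := p_mul_p
  have hdetw : γ * γi - 0 * 0 = 1 := by linear_combination hγ
  set t2 : Matrix.SpecialLinearGroup (Fin 2) (ZMod (p^2)) := mk2 γ 0 0 γi hdetw with ht2
  refine ⟨g * t2⁻¹ * w⁻¹, ?_, t2, rfl, by group⟩
  rw [mem_borel, mul_entry, mul_entry, mul_entry, inv_entries w, inv_entries t2]
  rw [hc] at hdet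
  have hγu : IsUnit γ := IsUnit.of_mul_eq_one _ hγ
  rw [← hγu.mul_right_eq_zero]
  simp only [ht2, mk2_00, mk2_01, mk2_10, mk2_11, hw00, hw01, hw10, hw11, hc,
    Matrix.cons_val_zero, Matrix.cons_val_one, Matrix.head_cons, Matrix.head_fin_const,
    Matrix.cons_val', Matrix.empty_val', Matrix.cons_val_fin_one, Matrix.cons_val_one,
    Matrix.of_apply]
  linear_combination ((p:ZMod (p^2))*v)*hγ - g.1 1 1 * hkey - ((p:ZMod (p^2))*v)*hdet
    - (g.1 0 1*v*v)*hpp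

end Coverage

lemma exists_right_inv {R : Type*} [CommRing R] {x : R} (h : IsUnit x) : ∃ y, x * y = 1 := by
  obtain ⟨u, rfl⟩ := h
  exact ⟨↑u⁻¹, u.mul_inv⟩

section Coverage2
variable {p : ℕ}

lemma coverage (hp : p.Prime) {n : ZMod (p^2)} (hn1 : IsUnit n)
    (hn2 : ¬ IsSquare (redZ p n)) (g : Matrix.SpecialLinearGroup (Fin 2) (ZMod (p^2))) :
    ∃ i : Fin 4, ∃ t1 ∈ BorelSubgroup (p^2), ∃ t2 ∈ BorelSubgroup (p^2),
      g = t1 * reps p n i * t2 := by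
  haveI : Fact p.Prime := ⟨hp⟩
  by_cases hc0 : g.1 1 0 = 0
  · exact ⟨0, g, hc0, 1, one_entry_10, by simp [reps]⟩
  by_cases hcu : IsUnit (g.1 1 0)
  · -- Bruhat cell: c is a unit
    refine ⟨1, ?_⟩
    obtain ⟨ci, hcci⟩ := exists_right_inv hcu
    have hdt2 : g.1 1 0 * ci - g.1 1 1 * 0 = 1 := by linear_combination hcci
    set t2 : Matrix.SpecialLinearGroup (Fin 2) (ZMod (p^2)) := mk2 (g.1 1 0) (g.1 1 1) 0 ci hdt2
      with ht2
    refine ⟨g * t2⁻¹ * (reps p n 1)⁻¹, ?_, t2, rfl, by group⟩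
    rw [mem_borel, mul_entry, mul_entry, mul_entry, inv_entries (reps p n 1), inv_entries t2]
    simp only [ht2, reps, mk2_00, mk2_01, mk2_10, mk2_11,
      Matrix.cons_val_zero, Matrix.cons_val_one, Matrix.head_cons, Matrix.head_fin_const,
      Matrix.cons_val', Matrix.empty_val', Matrix.cons_val_fin_one, Matrix.of_apply]
    ring
  · -- c = p * v, v a unit
    obtain ⟨v, hv⟩ := exists_p_mul hp _ hcu
    have hV : redZ p v ≠ 0 := by
      intro h0
      exact hc0 (hv.trans ((pmul_eq_zero_iff hp v).mpr h0))
    have hAD : redZ p (g.1 0 0) * redZ p (g.1 1 1) = 1 := by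
      have hdet := det_rel g
      have h2 := congrArg (redZ p) hdet
      simp only [_root_.map_sub, _root_.map_mul, _root_.map_one, hv, redZ_p, zero_mul,
        mul_zero, sub_zero] at h2
      exact h2
    have hA : redZ p (g.1 0 0) ≠ 0 := by
      intro h0
      rw [h0, zero_mul] at hAD
      exact zero_ne_one hAD
    have hAV : redZ p (g.1 0 0) * redZ p v ≠ 0 := mul_ne_zero hA hV
    by_cases hsq : IsSquare (redZ p (g.1 0 0) * redZ p v)
    · -- square case: representative (1 0; p 1)
      obtain ⟨s, hs0, hss⟩ := square_sqrt hAV hsq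
      obtain ⟨γ, hγu, hγs⟩ := lift_unit hp s hs0
      obtain ⟨γi, hγγi⟩ := exists_right_inv hγu
      refine ⟨2, ?_⟩
      apply coverage_unipotent g (reps p n 2) 1 v γ γi ?_ ?_ ?_ ?_ hv hγγi ?_
      · simp [reps]
      · simp [reps]
      · simp [reps]
      · simp [reps]
      · have : redZ p (1 * (γ * γ) - g.1 0 0 * v) = 0 := by
          simp only [_root_.map_sub, _root_.map_mul, _root_.map_one, hγs, one_mul]
          rw [hss]; ring
        have h0 := (pmul_eq_zero_iff hp _).mpr this
        linear_combination h0
    · -- nonsquare case: representative (1 0; p*n 1)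
      obtain ⟨s, hs0, hss⟩ := nonsquare_div_nonsquare hp hAV (redZ_unit_ne hp hn1) hsq hn2
      obtain ⟨γ, hγu, hγs⟩ := lift_unit hp s hs0
      obtain ⟨γi, hγγi⟩ := exists_right_inv hγu
      refine ⟨3, ?_⟩
      apply coverage_unipotent g (reps p n 3) n v γ γi ?_ ?_ ?_ ?_ hv hγγi ?_
      · simp [reps]
      · simp [reps]
      · simp [reps]
      · simp [reps]
      · have : redZ p (n * (γ * γ) - g.1 0 0 * v) = 0 := by
          simp only [_root_.map_sub, _root_.map_mul, hγs]
          rw [← hss]; ring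
        have h0 := (pmul_eq_zero_iff hp _).mpr this
        linear_combination h0

end Coverage2

section Inj
variable {p : ℕ}

lemma pm_cases {m : ℕ} {z : Matrix.SpecialLinearGroup (Fin 2) (ZMod m)} (hz : z ∈ pmOne m) :
    z = 1 ∨ z = -1 := by
  obtain ⟨k, rfl⟩ := Subgroup.mem_zpowers_iff.mp hz
  have h2 : ((-1 : Matrix.SpecialLinearGroup (Fin 2) (ZMod m)))^(2:ℤ) = 1 := by
    rw [show (2:ℤ) = ((2:ℕ):ℤ) from rfl, zpow_natCast]; exact neg_one_sq
  rcases Int.even_or_odd k with ⟨m', rfl⟩ | ⟨m', rfl⟩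
  · left; rw [← two_mul, _root_.zpow_mul, h2, _root_.one_zpow]
  · right; rw [_root_.zpow_add, zpow_one, _root_.zpow_mul, h2, _root_.one_zpow, one_mul]

lemma E10 {R : Type*} [CommRing R] (t1 g t2 : Matrix.SpecialLinearGroup (Fin 2) R)
    (h1 : t1.1 1 0 = 0) (h2 : t2.1 1 0 = 0) :
    (t1 * g * t2).1 1 0 = t1.1 1 1 * g.1 1 0 * t2.1 0 0 := by
  rw [mul_entry, mul_entry, mul_entry, h1, h2]; ring

lemma E00 {R : Type*} [CommRing R] (t1 g t2 : Matrix.SpecialLinearGroup (Fin 2) R)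
    (h1 : t1.1 1 0 = 0) (h2 : t2.1 1 0 = 0) :
    (t1 * g * t2).1 0 0 = (t1.1 0 0 * g.1 0 0 + t1.1 0 1 * g.1 1 0) * t2.1 0 0 := by
  rw [mul_entry, mul_entry, mul_entry, h2]; ring

lemma reps_e10 (n : ZMod (p^2)) (i : Fin 4) :
    (reps p n i).1 1 0 = ![0, 1, (p : ZMod (p^2)), (p : ZMod (p^2)) * n] i := by
  fin_cases i <;> simp [reps, one_entry_10]

lemma reps_e00 (n : ZMod (p^2)) (i : Fin 4) :
    (reps p n i).1 0 0 = ![1, 0, 1, 1] i := by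
  fin_cases i <;> simp [reps, one_entry_00]

lemma separation (hp : p.Prime) {n : ZMod (p^2)} (hn1 : IsUnit n)
    (hn2 : ¬ IsSquare (redZ p n)) {i j : Fin 4}
    {t1 t2 z : Matrix.SpecialLinearGroup (Fin 2) (ZMod (p^2))}
    (ht1 : t1 ∈ BorelSubgroup (p^2)) (ht2 : t2 ∈ BorelSubgroup (p^2)) (hz : z ∈ pmOne (p^2))
    (heq : reps p n j = t1 * reps p n i * t2 * z) : i = j := by
  haveI : Fact p.Prime := ⟨hp⟩
  rw [mem_borel] at ht1 ht2
  obtain ⟨ε, hε, hC, hA⟩ : ∃ ε : ZMod (p^2), ε * ε = 1 ∧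
      (reps p n j).1 1 0 = ε * ((t1 * reps p n i * t2).1 1 0) ∧
      (reps p n j).1 0 0 = ε * ((t1 * reps p n i * t2).1 0 0) := by
    rcases pm_cases hz with rfl | rfl
    · rw [mul_one] at heq
      exact ⟨1, by ring, by rw [heq, one_mul], by rw [heq, one_mul]⟩
    · rw [mul_neg_one] at heq
      refine ⟨-1, by ring, ?_, ?_⟩ <;>
        · rw [heq]
          show (-(t1 * reps p n i * t2).1) _ _ = _
          rw [Matrix.neg_apply]
          try ring
  rw [E10 _ _ _ ht1 ht2] at hC
  rw [E00 _ _ _ ht1 ht2] at hA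
  have hdt1 : t1.1 0 0 * t1.1 1 1 = 1 := by linear_combination det_rel t1 + t1.1 0 1 * ht1
  have hdt2 : t2.1 0 0 * t2.1 1 1 = 1 := by linear_combination det_rel t2 + t2.1 0 1 * ht2
  have hεu : IsUnit ε := IsUnit.of_mul_eq_one _ hε
  have hT1 : IsUnit (t1.1 1 1) := IsUnit.of_mul_eq_one (t1.1 0 0)
    (by linear_combination hdt1)
  have hS0 : IsUnit (t2.1 0 0) := IsUnit.of_mul_eq_one _ hdt2
  have hu : IsUnit (ε * (t1.1 1 1 * t2.1 0 0)) := hεu.mul (hT1.mul hS0)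
  have hC' : (reps p n j).1 1 0 = (ε * (t1.1 1 1 * t2.1 0 0)) * (reps p n i).1 1 0 := by
    rw [hC]; ring
  have hzero : (reps p n j).1 1 0 = 0 ↔ (reps p n i).1 1 0 = 0 := by
    rw [hC', hu.mul_right_eq_zero]
  have hunit : IsUnit ((reps p n j).1 1 0) ↔ IsUnit ((reps p n i).1 1 0) := by
    rw [hC', (Commute.all _ _).isUnit_mul_iff]
    exact ⟨fun h => h.2, fun h => ⟨hu, h⟩⟩
  have hp0 : (p : ZMod (p^2)) ≠ 0 := by
    intro h
    have := (pmul_eq_zero_iff hp 1).mp (by rw [mul_one]; exact h)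
    simp at this
  have hpn0 : (p : ZMod (p^2)) * n ≠ 0 := by
    intro h
    exact redZ_unit_ne hp hn1 ((pmul_eq_zero_iff hp n).mp h)
  have hpnu : ¬ IsUnit ((p : ZMod (p^2))) := by
    rw [isUnit_iff_redZ hp, not_not]; exact redZ_p
  have hpnnu : ¬ IsUnit ((p : ZMod (p^2)) * n) := by
    rw [isUnit_iff_redZ hp, not_not, _root_.map_mul, redZ_p, zero_mul]
  have sep23 : ∀ c1 c2 e1 e2 : ZMod (p^2), c1 = (p : ZMod (p^2)) * e1 →
      c2 = (p : ZMod (p^2)) * e2 → c2 = ε * (t1.1 1 1 * c1 * t2.1 0 0) →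
      redZ p e2 = redZ p ε * redZ p (t1.1 1 1) * redZ p e1 * redZ p (t2.1 0 0) := by
    intro c1 c2 e1 e2 h1 h2 hc2
    subst h1 h2
    have h0 : (p : ZMod (p^2)) * (e2 - ε * t1.1 1 1 * e1 * t2.1 0 0) = 0 := by
      linear_combination hc2
    have := (pmul_eq_zero_iff hp _).mp h0
    simp only [_root_.map_sub, _root_.map_mul, sub_eq_zero] at this
    linear_combination this
  have hETS : ∀ w : ZMod (p^2), redZ p w = 0 →
      (1 : ZMod (p^2)) = ε * ((t1.1 0 0 * 1 + t1.1 0 1 * w) * t2.1 0 0) →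
      redZ p ε * redZ p (t1.1 0 0) * redZ p (t2.1 0 0) = 1 := by
    intro w hw ha2
    have := congrArg (redZ p) ha2
    simp only [_root_.map_mul, _root_.map_add, _root_.map_one, hw, mul_zero, add_zero,
      mul_one] at this
    linear_combination (-1 : ZMod p) * this
  have hTT : redZ p (t1.1 0 0) * redZ p (t1.1 1 1) = 1 := by
    have := congrArg (redZ p) hdt1
    simpa only [_root_.map_mul, _root_.map_one] using this
  have hEE : redZ p ε * redZ p ε = 1 := by
    have := congrArg (redZ p) hε
    simpa only [_root_.map_mul, _root_.map_one] using this
  have hSne : redZ p (t2.1 0 0) ≠ 0 := redZ_unit_ne hp hS0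
  haveI : Fact (1 < p^2) := ⟨by nlinarith [hp.one_lt]⟩
  fin_cases i <;> fin_cases j
  · rfl
  · exact absurd ((show ((1:ZMod (p^2)) = 0 ↔ (0:ZMod (p^2)) = 0) from hzero).mpr rfl) one_ne_zero
  · exact absurd ((show (((p:ZMod (p^2))) = 0 ↔ (0:ZMod (p^2)) = 0) from hzero).mpr rfl) hp0
  · exact absurd ((show (((p:ZMod (p^2)) * n) = 0 ↔ (0:ZMod (p^2)) = 0) from hzero).mpr rfl) hpn0
  · exact absurd ((show ((0:ZMod (p^2)) = 0 ↔ (1:ZMod (p^2)) = 0) from hzero).mp rfl) one_ne_zero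
  · rfl
  · exact absurd ((show (IsUnit ((p:ZMod (p^2))) ↔ IsUnit (1:ZMod (p^2))) from hunit).mpr
      isUnit_one) hpnu
  · exact absurd ((show (IsUnit ((p:ZMod (p^2)) * n) ↔ IsUnit (1:ZMod (p^2))) from hunit).mpr
      isUnit_one) hpnnu
  · exact absurd ((show ((0:ZMod (p^2)) = 0 ↔ ((p:ZMod (p^2))) = 0) from hzero).mp rfl) hp0
  · exact absurd ((show (IsUnit (1:ZMod (p^2)) ↔ IsUnit ((p:ZMod (p^2)))) from hunit).mp
      isUnit_one) hpnu
  · rfl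
  · -- i = 2, j = 3
    exfalso
    have hr1 := sep23 (p : ZMod (p^2)) ((p : ZMod (p^2)) * n) 1 n (by rw [mul_one]) rfl hC
    have hr2 := hETS (p : ZMod (p^2)) redZ_p hA
    rw [_root_.map_one] at hr1
    exact hn2 ⟨redZ p (t2.1 0 0), by
      linear_combination hr1 - (redZ p ε * redZ p (t1.1 1 1) * redZ p (t2.1 0 0)) * hr2
        + (redZ p (t1.1 0 0) * redZ p (t1.1 1 1) * redZ p (t2.1 0 0) * redZ p (t2.1 0 0)) * hEE
        + (redZ p (t2.1 0 0) * redZ p (t2.1 0 0)) * hTT⟩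
  · exact absurd ((show ((0:ZMod (p^2)) = 0 ↔ ((p:ZMod (p^2)) * n) = 0) from hzero).mp rfl) hpn0
  · exact absurd ((show (IsUnit (1:ZMod (p^2)) ↔ IsUnit ((p:ZMod (p^2)) * n)) from hunit).mp
      isUnit_one) hpnnu
  · -- i = 3, j = 2
    exfalso
    have hr1 := sep23 ((p : ZMod (p^2)) * n) (p : ZMod (p^2)) n 1 rfl (by rw [mul_one]) hC
    have hr2 := hETS ((p : ZMod (p^2)) * n)
      (by rw [_root_.map_mul, redZ_p, zero_mul]) hA
    rw [_root_.map_one] at hr1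
    set E := redZ p ε
    set T := redZ p (t1.1 0 0)
    set T' := redZ p (t1.1 1 1)
    set S := redZ p (t2.1 0 0)
    set N := redZ p n
    have hNS2 : N * (S * S) = 1 := by
      linear_combination (-(N*S*S))*hEE + (-(N*S*S*E*E))*hTT + (E*T'*N*S)*hr2 - hr1
    refine hn2 ⟨S⁻¹, ?_⟩
    field_simp
    linear_combination hNS2
  · rfl
end Inj

/-- For `p` an odd prime, `G = SL₂(ℤ/p²ℤ)/{±I}` and `B` the image in `G` of the subgroup of
matrices with lower-left entry `≡ 0 (mod p²)`, the number of double cosets `B\G/B` is `4`. -/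
theorem card_double_cosets_eq_four (p : ℕ) (hp : p.Prime) (hodd : Odd p) :
    Nat.card (DoubleCoset.Quotient ((BorelImage (p ^ 2) : Subgroup (PSLmod (p ^ 2))) : Set (PSLmod (p ^ 2)))
      ((BorelImage (p ^ 2) : Subgroup (PSLmod (p ^ 2))) : Set (PSLmod (p ^ 2)))) = 4 := by
  obtain ⟨n', hn'0, hn'ns⟩ := exists_nonsquare_zmod hp hodd
  obtain ⟨n, hn1, hredn⟩ := lift_unit hp n' hn'0
  have hn2 : ¬ IsSquare (redZ p n) := by rw [hredn]; exact hn'ns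
  set π := QuotientGroup.mk' (pmOne (p^2)) with hπ
  set F : Fin 4 → DoubleCoset.Quotient
      ((BorelImage (p ^ 2) : Subgroup (PSLmod (p ^ 2))) : Set (PSLmod (p ^ 2)))
      ((BorelImage (p ^ 2) : Subgroup (PSLmod (p ^ 2))) : Set (PSLmod (p ^ 2))) :=
    fun i => DoubleCoset.mk (BorelImage (p^2)) (BorelImage (p^2)) (π (reps p n i)) with hF
  have hsurj : Function.Surjective F := by
    intro q
    obtain ⟨x, rfl⟩ : ∃ x, DoubleCoset.mk (BorelImage (p^2)) (BorelImage (p^2)) x = q :=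
      ⟨q.out, DoubleCoset.out_eq' _ _ q⟩
    obtain ⟨g, rfl⟩ : ∃ g, π g = x := QuotientGroup.mk'_surjective _ x
    obtain ⟨i, t1, ht1, t2, ht2, hg⟩ := coverage hp hn1 hn2 g
    refine ⟨i, ?_⟩
    rw [hF]; refine (DoubleCoset.eq _ _ _ _).mpr ?_
    refine ⟨π t1, Subgroup.mem_map_of_mem _ ht1, π t2, Subgroup.mem_map_of_mem _ ht2, ?_⟩
    rw [hg, _root_.map_mul, _root_.map_mul]; rfl
  have hinj : Function.Injective F := by
    intro i j hij
    rw [hF] at hij; replace hij := (DoubleCoset.eq _ _ _ _).mp hij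
    obtain ⟨h, hh, k, hk, heq⟩ := hij
    obtain ⟨t1, ht1, rfl⟩ := Subgroup.mem_map.mp hh
    obtain ⟨t2, ht2, rfl⟩ := Subgroup.mem_map.mp hk
    have heq2 : π (reps p n j) = π t1 * π (reps p n i) * π t2 := heq
    rw [← _root_.map_mul, ← _root_.map_mul] at heq2
    obtain ⟨z, hz, hzz⟩ := (QuotientGroup.mk'_eq_mk' (pmOne (p^2))).mp heq2.symm
    exact separation hp hn1 hn2 ht1 ht2 hz hzz.symm
  have e : Fin 4 ≃ DoubleCoset.Quotient
      ((BorelImage (p ^ 2) : Subgroup (PSLmod (p ^ 2))) : Set (PSLmod (p ^ 2)))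
      ((BorelImage (p ^ 2) : Subgroup (PSLmod (p ^ 2))) : Set (PSLmod (p ^ 2))) :=
    Equiv.ofBijective F ⟨hinj, hsurj⟩
  rw [← Nat.card_congr e, Nat.card_eq_fintype_card, Fintype.card_fin]
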